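/- Let k be a field of characteristic zero, n > 1, λ ∈ k a primitive n-th root of unity, and let P = MvPolynomial (Fin 3) k carry a Poisson bracket ⁅·,·⁆ together with a linear Taft action datum (g, x). If ⁅u₂,u₃⁆ is homogeneous of degree 1, then there exists b ∈ k such that ⁅u₁,u₂⁆ = 0, ⁅u₃,u₂⁆ = b·u₂, and ⁅u₃,u₁⁆ = b·u₁. -/

import Mathlib

open MvPolynomial


lemma taft_deg3 (d : Fin 3 →₀ ℕ) : Finsupp.weight 1 d = d 0 + d 1 + d 2 := by
  rw [show (Finsupp.weight 1 : (Fin 3 →₀ ℕ) →+ ℕ) = Finsupp.weight (fun _ => 1) from rfl,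
    ← Finsupp.degree_eq_weight_one, Finsupp.degree_apply,
    Finset.sum_subset (Finset.subset_univ _)]
  · simp [Fin.sum_univ_three]
  · simp

lemma taft_split (d : Fin 3 →₀ ℕ) :
    Finsupp.single (0 : Fin 3) (d 0) + Finsupp.single 1 (d 1) + Finsupp.single 2 (d 2) = d := by
  ext i
  fin_cases i <;> simp [Finsupp.single_apply]

lemma taft_mono {k : Type*} [Field k] (d : Fin 3 →₀ ℕ) (c : k) :
    (monomial d c : MvPolynomial (Fin 3) k) =
      c • (X 0 ^ d 0 * X 1 ^ d 1 * X 2 ^ d 2) := by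
  conv_lhs => rw [← taft_split d]
  rw [X_pow_eq_monomial, X_pow_eq_monomial, X_pow_eq_monomial, monomial_mul, monomial_mul,
    smul_monomial]
  simp

lemma taft_tau0 (d : Fin 3 →₀ ℕ) :
    (d - Finsupp.single 0 1 + Finsupp.single 1 1 : Fin 3 →₀ ℕ) 0 = d 0 - 1 := by
  simp [Finsupp.single_apply]

lemma taft_tau1 (d : Fin 3 →₀ ℕ) :
    (d - Finsupp.single 0 1 + Finsupp.single 1 1 : Fin 3 →₀ ℕ) 1 = d 1 + 1 := by
  simp [Finsupp.single_apply]

lemma taft_tau2 (d : Fin 3 →₀ ℕ) :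
    (d - Finsupp.single 0 1 + Finsupp.single 1 1 : Fin 3 →₀ ℕ) 2 = d 2 := by
  simp [Finsupp.single_apply]

/-- The `q`-integer `[i]` for `q = lam⁻¹`. -/
def taftQ {k : Type*} [Field k] (lam : k) (i : ℕ) : k := ∑ j ∈ Finset.range i, lam⁻¹ ^ j

lemma taftQ_succ {k : Type*} [Field k] (lam : k) (i : ℕ) :
    taftQ lam (i + 1) = lam⁻¹ * taftQ lam i + 1 := geom_sum_succ

lemma taftQ_zero_iff {k : Type*} [Field k] {n : ℕ} (hn : 1 < n) {lam : k}
    (hlam : IsPrimitiveRoot lam n) (i : ℕ) : taftQ lam i = 0 ↔ n ∣ i := by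
  have hlne : lam⁻¹ ≠ 1 := (hlam.inv).ne_one hn
  have hsub : lam⁻¹ - 1 ≠ 0 := sub_ne_zero.mpr hlne
  have h : taftQ lam i * (lam⁻¹ - 1) = lam⁻¹ ^ i - 1 := geom_sum_mul _ _
  constructor
  · intro h0
    rw [h0, zero_mul] at h
    exact (hlam.inv.pow_eq_one_iff_dvd i).mp (eq_of_sub_eq_zero h.symm)
  · intro hd
    have h1 : lam⁻¹ ^ i = 1 := (hlam.inv.pow_eq_one_iff_dvd i).mpr hd
    rw [h1, sub_self] at h
    rcases mul_eq_zero.mp h with h2 | h2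
    · exact h2
    · exact absurd h2 hsub


/-- If a Taft algebra `T_n(λ)` acts linearly (in the standard form) on a Poisson polynomial
algebra `k[u₁,u₂,u₃]` and `⁅u₂,u₃⁆` is homogeneous of degree 1, then there is `b ∈ k` with
`⁅u₁,u₂⁆ = 0`, `⁅u₃,u₂⁆ = b·u₂` and `⁅u₃,u₁⁆ = b·u₁`. -/
theorem taft_linear_bracket {k : Type*} [Field k] [CharZero k]
    {n : ℕ} (hn : 1 < n) {lam : k} (hlam : IsPrimitiveRoot lam n)
    (B : MvPolynomial (Fin 3) k → MvPolynomial (Fin 3) k → MvPolynomial (Fin 3) k)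
    (hB_addl : ∀ a b c, B (a + b) c = B a c + B b c)
    (hB_addr : ∀ a b c, B a (b + c) = B a b + B a c)
    (hB_smull : ∀ (r : k) (a b), B (r • a) b = r • B a b)
    (hB_smulr : ∀ (r : k) (a b), B a (r • b) = r • B a b)
    (hB_anti : ∀ a b, B a b = -B b a)
    (hB_jac : ∀ a b c, B a (B b c) + B b (B c a) + B c (B a b) = 0)
    (hB_leib : ∀ a b c, B a (b * c) = B a b * c + b * B a c)
    (g : MvPolynomial (Fin 3) k ≃ₐ[k] MvPolynomial (Fin 3) k)
    (hg0 : g (X 0) = lam⁻¹ • X 0)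
    (hgi : ∀ i : Fin 3, i ≠ 0 → g (X i) = X i)
    (hgB : ∀ a b, g (B a b) = B (g a) (g b))
    (x : MvPolynomial (Fin 3) k →ₗ[k] MvPolynomial (Fin 3) k)
    (hx0 : x (X 0) = X 1)
    (hxi : ∀ i : Fin 3, i ≠ 0 → x (X i) = 0)
    (hx_mul : ∀ a b, x (a * b) = g a * x b + x a * b)
    (hxB : ∀ a b, x (B a b) = B (g a) (x b) + B (x a) b)
    (hhom : (B (X 1) (X 2)).IsHomogeneous 1) :
    ∃ b : k, B (X 0) (X 1) = 0 ∧ B (X 2) (X 1) = b • X 1 ∧ B (X 2) (X 0) = b • X 0 := by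
  have hlne : lam⁻¹ ≠ 1 := (hlam.inv).ne_one hn
  have hlam0 : lam⁻¹ ≠ 0 := inv_ne_zero (hlam.ne_zero (by omega))
  -- `B a 0 = 0`
  have hB0 : ∀ a, B a 0 = 0 := by
    intro a
    have := hB_smulr 0 a 0
    simpa using this
  -- `B a a = 0`
  have hBaa : ∀ a, B a a = 0 := by
    intro a
    have h := hB_anti a a
    have h2 : (2 : k) • B a a = 0 := by
      rw [two_smul]
      nth_rewrite 1 [h]
      simp
    rcases smul_eq_zero.mp h2 with h3 | h3
    · exact absurd h3 two_ne_zero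
    · exact h3
  -- action of `g` on monomials and coefficients
  have hgmono : ∀ (d : Fin 3 →₀ ℕ) (c : k),
      g (monomial d c) = lam⁻¹ ^ (d 0) • monomial d c := by
    intro d c
    rw [taft_mono d c, map_smul, map_mul, map_mul, map_pow, map_pow, map_pow, hg0,
      hgi 1 (by decide), hgi 2 (by decide), smul_pow]
    simp only [smul_mul_assoc]
    rw [smul_comm]
  have hgcoeff : ∀ (p : MvPolynomial (Fin 3) k) (d : Fin 3 →₀ ℕ),
      coeff d (g p) = lam⁻¹ ^ (d 0) * coeff d p := by
    intro p
    induction p using MvPolynomial.induction_on' with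
    | monomial d' c =>
      intro d
      rw [hgmono, coeff_smul, coeff_monomial]
      by_cases h : d' = d
      · subst h; rw [smul_eq_mul]
      · simp [h]
    | add p r hp hr =>
      intro d
      simp [map_add, hp, hr, mul_add]
  -- action of `x` on monomials
  have hx1 : x 1 = 0 := by
    have h := hx_mul 1 1
    rw [mul_one, show g (1 : MvPolynomial (Fin 3) k) = 1 from map_one g, one_mul, mul_one] at h
    linear_combination -h
  have hxX2pow : ∀ j, x (X 2 ^ j) = 0 := by
    intro j
    induction j with
    | zero => simpa using hx1
    | succ m ih =>
      rw [pow_succ, hx_mul, ih, hxi 2 (by decide)]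
      simp
  have hxX1pow : ∀ j, x (X 1 ^ j) = 0 := by
    intro j
    induction j with
    | zero => simpa using hx1
    | succ m ih =>
      rw [pow_succ, hx_mul, ih, hxi 1 (by decide)]
      simp
  have hxpow0 : ∀ i, x (X 0 ^ i) = taftQ lam i • (X 1 * X 0 ^ (i - 1)) := by
    intro i
    induction i with
    | zero =>
      simpa [taftQ] using hx1
    | succ m ih =>
      rw [pow_succ', hx_mul, ih, hg0, hx0, taftQ_succ]
      cases m with
      | zero => simp [taftQ]
      | succ l =>
        simp only [Nat.add_sub_cancel]
        simp only [smul_eq_C_mul, map_add, map_mul, map_one]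
        ring
  have hxrest : ∀ j l : ℕ, x (X 1 ^ j * X 2 ^ l) = 0 := by
    intro j l
    rw [hx_mul, hxX2pow, hxX1pow]
    simp
  have hxmono : ∀ (d : Fin 3 →₀ ℕ) (c : k),
      x (monomial d c) = taftQ lam (d 0) •
        monomial (d - Finsupp.single 0 1 + Finsupp.single 1 1) c := by
    intro d c
    rw [taft_mono d c, mul_assoc, map_smul, hx_mul, hxrest, mul_zero, zero_add, hxpow0,
      taft_mono _ c]
    simp only [taft_tau0, taft_tau1, taft_tau2]
    simp only [smul_eq_C_mul]
    ring
  -- coefficients of `x p`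
  have hxcoeff : ∀ (p : MvPolynomial (Fin 3) k) (d : Fin 3 →₀ ℕ), 1 ≤ d 0 →
      coeff (d - Finsupp.single 0 1 + Finsupp.single 1 1) (x p) =
        taftQ lam (d 0) * coeff d p := by
    intro p
    induction p using MvPolynomial.induction_on' with
    | monomial d' c =>
      intro d hd
      rw [hxmono, coeff_smul, coeff_monomial, coeff_monomial, smul_eq_mul]
      by_cases h : d' = d
      · subst h; simp
      · rw [if_neg h, mul_zero]
        by_cases h0 : d' 0 = 0
        · have : taftQ lam (d' 0) = 0 := by rw [h0]; simp [taftQ]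
          rw [this, zero_mul]
        · rw [if_neg, mul_zero]
          intro heq
          apply h
          ext i
          have h0' := DFunLike.congr_fun heq 0
          have h1' := DFunLike.congr_fun heq 1
          have h2' := DFunLike.congr_fun heq 2
          rw [taft_tau0, taft_tau0] at h0'
          rw [taft_tau1, taft_tau1] at h1'
          rw [taft_tau2, taft_tau2] at h2'
          fin_cases i <;> simp <;> omega
    | add p r hp hr =>
      intro d hd
      simp [map_add, hp d hd, hr d hd, mul_add]
  -- eigenvalue analysis
  have key : ∀ (p : MvPolynomial (Fin 3) k), g p = lam⁻¹ • p →
      ∀ d : Fin 3 →₀ ℕ, coeff d p ≠ 0 → 1 ≤ d 0 ∧ taftQ lam (d 0) ≠ 0 := by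
    intro p hp d hc
    have h1 : lam⁻¹ ^ (d 0) * coeff d p = lam⁻¹ * coeff d p := by
      rw [← hgcoeff, hp, coeff_smul, smul_eq_mul]
    have h2 : lam⁻¹ ^ (d 0) = lam⁻¹ := mul_right_cancel₀ hc h1
    rcases Nat.eq_zero_or_pos (d 0) with h0 | h0
    · rw [h0, pow_zero] at h2
      exact absurd h2.symm hlne
    · obtain ⟨m, hm⟩ : ∃ m, d 0 = m + 1 := ⟨d 0 - 1, by omega⟩
      have h3 : lam⁻¹ ^ m = 1 := by
        rw [hm, pow_succ] at h2
        have := mul_right_cancel₀ hlam0 (h2.trans (one_mul lam⁻¹).symm)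
        exact this
      have hnm : n ∣ m := (hlam.inv.pow_eq_one_iff_dvd m).mp h3
      refine ⟨h0, fun h4 => ?_⟩
      have hdvd := (taftQ_zero_iff hn hlam _).mp h4
      rw [hm] at hdvd
      have := Nat.dvd_sub hdvd hnm
      simp only [Nat.add_sub_cancel_left] at this
      have := Nat.le_of_dvd one_pos this
      omega
  -- Step 1 : B(u₁,u₂) = 0
  have hF : B (X 0) (X 1) = 0 := by
    have hgF : g (B (X 0) (X 1)) = lam⁻¹ • B (X 0) (X 1) := by
      rw [hgB, hg0, hgi 1 (by decide), hB_smull]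
    have hxF : x (B (X 0) (X 1)) = 0 := by
      rw [hxB, hg0, hx0, hxi 1 (by decide), hB0, hBaa, add_zero]
    apply MvPolynomial.ext
    intro d
    rw [coeff_zero]
    by_contra hc
    obtain ⟨hd1, hqne⟩ := key _ hgF d hc
    have h5 := hxcoeff (B (X 0) (X 1)) d hd1
    rw [hxF, coeff_zero] at h5
    exact hc (by
      rcases mul_eq_zero.mp h5.symm with h6 | h6
      · exact absurd h6 hqne
      · exact h6)
  -- Step 2 : B(u₁,u₃) = c₀ • u₁
  have hgG : g (B (X 0) (X 2)) = lam⁻¹ • B (X 0) (X 2) := by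
    rw [hgB, hg0, hgi 2 (by decide), hB_smull]
  have hxG : x (B (X 0) (X 2)) = B (X 1) (X 2) := by
    rw [hxB, hg0, hx0, hxi 2 (by decide), hB0, zero_add]
  set c0 : k := coeff (Finsupp.single 0 1) (B (X 0) (X 2)) with hc0def
  have hGeq : B (X 0) (X 2) = c0 • X 0 := by
    apply MvPolynomial.ext
    intro d
    rw [coeff_smul, coeff_X', smul_eq_mul]
    by_cases hd : Finsupp.single (0 : Fin 3) 1 = d
    · rw [if_pos hd, mul_one, ← hd, hc0def]
    · rw [if_neg hd, mul_zero]
      by_contra hc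
      obtain ⟨hd1, hqne⟩ := key _ hgG d hc
      have h5 := hxcoeff (B (X 0) (X 2)) d hd1
      rw [hxG] at h5
      have hne : coeff (d - Finsupp.single 0 1 + Finsupp.single 1 1) (B (X 1) (X 2)) ≠ 0 := by
        rw [h5]
        exact mul_ne_zero hqne hc
      have hdeg := hhom hne
      rw [taft_deg3, taft_tau0, taft_tau1, taft_tau2] at hdeg
      apply hd
      ext i
      fin_cases i <;> simp [Finsupp.single_apply] <;> omega
  have hH : B (X 1) (X 2) = c0 • X 1 := by
    rw [← hxG, hGeq, map_smul, hx0]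
  refine ⟨-c0, hF, ?_, ?_⟩
  · rw [hB_anti, hH, neg_smul]
  · rw [hB_anti, hGeq, neg_smul]
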